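/- Let P, Q ⊆ ℕ be disjoint and inhabited. Then there exists a winning Arthur+Nimue strategy with partial computable Arthur strategy for the reduction game of the basic oracle {P ⊗ Q, Q ⊗ P} to the basic oracle {P, Q}, and also one for the reduction game of {P, Q} to {P ⊗ Q, Q ⊗ P}; i.e. the coding degrees c_{P⊗Q, Q⊗P} and c_{P,Q} are equal. -/

import Mathlib

open Classical in
/-- The oracle game: the list of previous answers by Merlin up to stage `i`,
for the answer sequence `s`. -/
def prefixList (s : ℕ → ℕ) (i : ℕ) : List ℕ := List.ofFn (fun j : Fin i => s j)

/-- A winning Arthur+Nimue strategy for the reduction game of the basic oracle `ℱ`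
to the basic oracle `𝒢`. -/
def Winning (ℱ 𝒢 : Set (Set ℕ)) (σ : List ℕ →. Option ℕ) (ν : Set ℕ → List ℕ → Set ℕ) : Prop :=
  (∀ F ∈ ℱ, ∀ l : List ℕ, ν F l ∈ 𝒢) ∧
  ∀ F ∈ ℱ, ∀ s : ℕ → ℕ, (∀ i, s i ∈ ν F (prefixList s i)) →
    ∃ k, (∀ i ≤ k, (σ (prefixList s i)).Dom) ∧
      (∀ i < k, none ∈ σ (prefixList s i)) ∧
      ∃ u ∈ F, some u ∈ σ (prefixList s k)

/-- The encoding of an Arthur strategy as a partial function `ℕ →. ℕ`, via the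
standard Mathlib encodings of `List ℕ` and `Option ℕ`. -/
def arthurCode (σ : List ℕ →. Option ℕ) : ℕ →. ℕ :=
  fun n => (σ (Denumerable.ofNat (List ℕ) n)).map Encodable.encode

open Classical in
/-- The decoding oracle associated to the promise problem `(P, Q)`: value `0` on `P`,
value `1` on `Q`, undefined elsewhere. -/
noncomputable def dOracle (P Q : Set ℕ) : ℕ →. ℕ :=
  fun n => ⟨n ∈ P ∪ Q, fun _ => if n ∈ Q then 1 else 0⟩

open Classical in
/-- The characteristic function of a set of naturals. -/
noncomputable def chi (A : Set ℕ) : ℕ → ℕ := fun n => if n ∈ A then 1 else 0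

/-- The coded cartesian product of two sets of naturals. -/
def tensor (P Q : Set ℕ) : Set ℕ := {x | ∃ p ∈ P, ∃ q ∈ Q, x = Nat.pair p q}

infixl:70 " ⊗ " => tensor

/-- Oracle computability, as in Mathlib's `Nat.RecursiveIn`. -/
inductive Nat.RecursiveInOne (g : ℕ →. ℕ) : (ℕ →. ℕ) → Prop
  | zero : Nat.RecursiveInOne g fun _ => 0
  | succ : Nat.RecursiveInOne g Nat.succ
  | left : Nat.RecursiveInOne g fun n => (Nat.unpair n).1
  | right : Nat.RecursiveInOne g fun n => (Nat.unpair n).2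
  | oracle : Nat.RecursiveInOne g g
  | pair {f h : ℕ →. ℕ} (hf : Nat.RecursiveInOne g f) (hh : Nat.RecursiveInOne g h) :
      Nat.RecursiveInOne g fun n => (Nat.pair <$> f n <*> h n)
  | comp {f h : ℕ →. ℕ} (hf : Nat.RecursiveInOne g f) (hh : Nat.RecursiveInOne g h) :
      Nat.RecursiveInOne g fun n => h n >>= f
  | prec {f h : ℕ →. ℕ} (hf : Nat.RecursiveInOne g f) (hh : Nat.RecursiveInOne g h) :
      Nat.RecursiveInOne g
        (Nat.unpaired fun a n =>
          n.rec (f a) fun y IH => do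
            let i ← IH
            h (Nat.pair a (Nat.pair y i)))
  | rfind {f : ℕ →. ℕ} (hf : Nat.RecursiveInOne g f) :
      Nat.RecursiveInOne g fun a =>
        Nat.rfind fun n => (fun m => m = 0) <$> f (Nat.pair a n)

/-- `f` is T1-reducible to `g`: some partial function recursive in the oracle `g`
extends `f`. -/
def T1Reducible (f g : ℕ →. ℕ) : Prop :=
  ∃ h : ℕ →. ℕ, Nat.RecursiveInOne g h ∧ ∀ n : ℕ, ∀ a ∈ f n, a ∈ h n

/-- `f` is T1-computable: it has a partial computable extension. -/
def T1Computable (f : ℕ →. ℕ) : Prop :=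
  ∃ h : ℕ →. ℕ, Nat.Partrec h ∧ ∀ n : ℕ, ∀ a ∈ f n, a ∈ h n

/-- Codes for oracle computations: Mathlib's `Nat.Partrec.Code` extended by an
`oracle` constructor. -/
inductive OCode : Type
  | zero : OCode
  | succ : OCode
  | left : OCode
  | right : OCode
  | oracle : OCode
  | pair : OCode → OCode → OCode
  | comp : OCode → OCode → OCode
  | prec : OCode → OCode → OCode
  | rfind' : OCode → OCode

/-- Evaluation of an oracle code relative to the oracle `g`, by the same structural
recursion as Mathlib's `Nat.Partrec.Code.eval`. -/
def OCode.eval (g : ℕ →. ℕ) : OCode → ℕ →. ℕ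
  | .zero => pure 0
  | .succ => Nat.succ
  | .left => ↑fun n : ℕ => n.unpair.1
  | .right => ↑fun n : ℕ => n.unpair.2
  | .oracle => g
  | .pair cf cg => fun n => Nat.pair <$> cf.eval g n <*> cg.eval g n
  | .comp cf cg => fun n => cg.eval g n >>= cf.eval g
  | .prec cf cg =>
    Nat.unpaired fun a n =>
      n.rec (cf.eval g a) fun y IH => do
        let i ← IH
        cg.eval g (Nat.pair a (Nat.pair y i))
  | .rfind' cf =>
    Nat.unpaired fun a m =>
      (Nat.rfind fun n => (fun m => m = 0) <$> cf.eval g (Nat.pair a (n + m))).map (· + m)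

/-- The `n`-th oracle code. -/
def OCode.ofNat : ℕ → OCode
  | 0 => .zero
  | 1 => .succ
  | 2 => .left
  | 3 => .right
  | 4 => .oracle
  | n + 5 =>
    have h1 : (n / 4).unpair.1 < n + 5 :=
      lt_of_le_of_lt (le_trans (Nat.unpair_left_le _) (Nat.div_le_self _ _)) (by omega)
    have h2 : (n / 4).unpair.2 < n + 5 :=
      lt_of_le_of_lt (le_trans (Nat.unpair_right_le _) (Nat.div_le_self _ _)) (by omega)
    if n % 4 = 0 then .pair (OCode.ofNat (n / 4).unpair.1) (OCode.ofNat (n / 4).unpair.2)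
    else if n % 4 = 1 then .comp (OCode.ofNat (n / 4).unpair.1) (OCode.ofNat (n / 4).unpair.2)
    else if n % 4 = 2 then .prec (OCode.ofNat (n / 4).unpair.1) (OCode.ofNat (n / 4).unpair.2)
    else .rfind' (OCode.ofNat (n / 4).unpair.1)

/-- `φ_e^g`: the evaluation of the `e`-th oracle code relative to the oracle `g`. -/
def phi (g : ℕ →. ℕ) (e : ℕ) : ℕ →. ℕ := (OCode.ofNat e).eval g

/-- `H_i^A`: the set of (codes of) oracle programs which, run with the characteristic
function of `A` as oracle, halt on input `0` with output `i`. -/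
def Hset (A : Set ℕ) (i : ℕ) : Set ℕ := {e : ℕ | (i : ℕ) ∈ phi (chi A) e 0}


theorem stmt12 (P Q : Set ℕ) (hdisj : Disjoint P Q) (hP : P.Nonempty) (hQ : Q.Nonempty) :
    (∃ (σ : List ℕ →. Option ℕ) (ν : Set ℕ → List ℕ → Set ℕ),
      Partrec σ ∧ Winning {P ⊗ Q, Q ⊗ P} {P, Q} σ ν) ∧
    (∃ (σ : List ℕ →. Option ℕ) (ν : Set ℕ → List ℕ → Set ℕ),
      Partrec σ ∧ Winning {P, Q} {P ⊗ Q, Q ⊗ P} σ ν) := by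
  classical
  have hne : P ⊗ Q ≠ Q ⊗ P := by
    obtain ⟨p, hp⟩ := hP; obtain ⟨q, hq⟩ := hQ
    intro h
    have hm : Nat.pair p q ∈ P ⊗ Q := ⟨p, hp, q, hq, rfl⟩
    rw [h] at hm
    obtain ⟨a, ha, b, hb, he⟩ := hm
    obtain ⟨h1, -⟩ := Nat.pair_eq_pair.mp he
    exact Set.disjoint_left.mp hdisj hp (h1 ▸ ha)
  constructor
  · -- game 1 : {P ⊗ Q, Q ⊗ P} to {P, Q}
    refine ⟨fun l => Part.some (l[0]?.bind fun a =>
        l[1]?.map fun b => Nat.pair a b),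
      fun F l => if F = P ⊗ Q then (if l = [] then P else Q)
        else (if l = [] then Q else P), ?_, ?_, ?_⟩
    · apply Computable.partrec
      apply Primrec.to_comp
      exact Primrec.option_bind (Primrec.list_getElem?.comp .id (.const 0))
        (Primrec.option_map (Primrec.list_getElem?.comp .fst (.const 1))
          (Primrec₂.natPair.comp (Primrec.snd.comp .fst) .snd))
    · intro F hF l
      by_cases h1 : F = P ⊗ Q <;> by_cases h2 : l = [] <;>
        simp [h1, h2, Set.mem_insert_iff]
    · intro F hF s hs
      have h0 : prefixList s 0 = [] := by simp [prefixList]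
      have h1 : prefixList s 1 = [s 0] := by simp [prefixList]
      have h2 : prefixList s 2 = [s 0, s 1] := by
        simp [prefixList, List.ofFn_succ]
      refine ⟨2, fun i _ => trivial, ?_, Nat.pair (s 0) (s 1), ?_, ?_⟩
      · intro i hi
        interval_cases i <;> simp [h0, h1, Part.mem_some_iff]
      · have m0 := hs 0
        have m1 := hs 1
        rw [h0] at m0
        rw [h1] at m1
        rcases hF with hF | hF
        · simp only [if_pos hF, if_pos rfl, if_neg (List.cons_ne_nil (s 0) [])] at m0 m1
          exact hF ▸ ⟨s 0, m0, s 1, m1, rfl⟩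
        · simp only [Set.mem_singleton_iff] at hF
          have hne' : F ≠ P ⊗ Q := hF ▸ (Ne.symm hne)
          simp only [if_neg hne'] at m0 m1
          simp only [if_true] at m0
          rw [if_neg (List.cons_ne_nil (s 0) [])] at m1
          exact hF ▸ ⟨s 0, m0, s 1, m1, rfl⟩
      · simp [h2, Part.mem_some_iff]
  · -- game 2 : {P, Q} to {P ⊗ Q, Q ⊗ P}
    refine ⟨fun l => Part.some (l[0]?.map fun a => a.unpair.1),
      fun F _ => if F = P then P ⊗ Q else Q ⊗ P, ?_, ?_, ?_⟩
    · apply Computable.partrec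
      apply Primrec.to_comp
      exact Primrec.option_map (Primrec.list_getElem?.comp .id (.const 0))
        (Primrec.fst.comp (Primrec.unpair.comp .snd)).to₂
    · intro F hF l
      by_cases h1 : F = P <;> simp [h1, Set.mem_insert_iff]
    · intro F hF s hs
      have h0 : prefixList s 0 = [] := by simp [prefixList]
      have h1 : prefixList s 1 = [s 0] := by simp [prefixList]
      have m0 := hs 0
      rw [h0] at m0
      refine ⟨1, fun i _ => trivial, ?_, (s 0).unpair.1, ?_, ?_⟩
      · intro i hi
        interval_cases i
        simp [h0, Part.mem_some_iff]
      · rcases hF with hF | hF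
        · simp only [if_pos hF] at m0
          obtain ⟨p, hp, q, hq, he⟩ := m0
          rw [he, Nat.unpair_pair]
          exact hF ▸ hp
        · simp only [Set.mem_singleton_iff] at hF
          have hne' : F ≠ P := by
            rintro rfl
            obtain ⟨p, hp⟩ := hP
            exact Set.disjoint_left.mp hdisj hp (hF ▸ hp)
          simp only [if_neg hne'] at m0
          obtain ⟨q, hq, p, hp, he⟩ := m0
          rw [he, Nat.unpair_pair]
          exact hF ▸ hq
      · simp [h1, Part.mem_some_iff]
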